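/- With c1M = 2H1+4H2, c2M = 8H1H2+6H2^2, c1 = 4H1+5H2, c2 = 16H1H2+14H2^2, c3 = 32H1H2^2+14H2^3, c4 = 24H1H2^3 in Z[H1,H2]/(H1^2,H2^4), the coefficient of H1H2^3 in (c2M − c1M·c1 − c2 + c1^2)·c2 + (−c1M + 2c1)·c3 + c4 equals 336. -/
import Mathlib

set_option synthInstance.maxHeartbeats 1000000
set_option maxHeartbeats 1000000

open MvPolynomial in
/-- The cohomology ring of P¹ × P³ is ℤ[H1,H2]/(H1², H2⁴). -/
noncomputable abbrev CohP1P3 : Type :=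
  MvPolynomial (Fin 2) ℤ ⧸
    Ideal.span ({X 0 ^ 2, X 1 ^ 4} : Set (MvPolynomial (Fin 2) ℤ))

noncomputable def H1 : CohP1P3 := Ideal.Quotient.mk _ (MvPolynomial.X 0)
noncomputable def H2 : CohP1P3 := Ideal.Quotient.mk _ (MvPolynomial.X 1)

open MvPolynomial in
lemma key : (Ideal.Quotient.mk
      (Ideal.span ({X 0 ^ 2, X 1 ^ 4} : Set (MvPolynomial (Fin 2) ℤ))))
    ((8 * X 0 * X 1 + 6 * X 1 ^ 2 - (2 * X 0 + 4 * X 1) * (4 * X 0 + 5 * X 1)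
        - (16 * X 0 * X 1 + 14 * X 1 ^ 2) + (4 * X 0 + 5 * X 1) ^ 2)
      * (16 * X 0 * X 1 + 14 * X 1 ^ 2)
      + (-(2 * X 0 + 4 * X 1) + 2 * (4 * X 0 + 5 * X 1))
        * (32 * X 0 * X 1 ^ 2 + 14 * X 1 ^ 3)
      + 24 * X 0 * X 1 ^ 3)
    = (Ideal.Quotient.mk _) (336 * (X 0 * X 1 ^ 3)) :=
  Ideal.Quotient.eq.mpr (Ideal.mem_span_pair.mpr
    ⟨400 * X 1 ^ 2 + 128 * X 0 * X 1, 42, by ring⟩)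

/-- Corrected Harris–Tu formula: (c2M − c1M·c1 − c2 + c1²)·c2 + (−c1M + 2c1)·c3 + c4
equals 336·H1H2³ in ℤ[H1,H2]/(H1²,H2⁴), i.e. the coefficient of H1H2³ is 336. -/
theorem c2Z_value :
    ∀ c1M c2M c1 c2 c3 c4 : CohP1P3,
      c1M = 2 * H1 + 4 * H2 → c2M = 8 * H1 * H2 + 6 * H2 ^ 2 →
      c1 = 4 * H1 + 5 * H2 → c2 = 16 * H1 * H2 + 14 * H2 ^ 2 →
      c3 = 32 * H1 * H2 ^ 2 + 14 * H2 ^ 3 → c4 = 24 * H1 * H2 ^ 3 →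
      (c2M - c1M * c1 - c2 + c1 ^ 2) * c2 + (-c1M + 2 * c1) * c3 + c4
        = 336 * (H1 * H2 ^ 3) := by
  rintro _ _ _ _ _ _ rfl rfl rfl rfl rfl rfl
  have h := key
  simp only [map_add, map_mul, map_sub, map_neg, map_pow, map_ofNat] at h
  simpa [H1, H2] using h
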